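/- Let f be the symbol of a densely defined Liouville operator A_f on H², and let γ : [0,T] → 𝔻 be a C¹ trajectory with γ̇(t) = f(γ(t)). Then the occupation kernel Γ_γ lies in the domain of A_f*, and A_f* Γ_γ = K_{γ(T)} − K_{γ(0)}, where K_w is the Szegő kernel. -/

import Mathlib

open Metric ComplexConjugate

noncomputable abbrev H2 : Type := lp (fun _ : ℕ => ℂ) 2

noncomputable def hardyEval (h : H2) (z : ℂ) : ℂ := ∑' n : ℕ, h n * z ^ n


lemma hardy_summable (h : H2) {z : ℂ} (hz : ‖z‖ < 1) : Summable (fun n : ℕ => h n * z ^ n) := by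
  apply Summable.of_norm
  apply Summable.of_nonneg_of_le (fun n => norm_nonneg _) (fun n => ?_)
    ((summable_geometric_of_lt_one (norm_nonneg z) hz).mul_left ‖h‖)
  rw [norm_mul, norm_pow]
  exact mul_le_mul_of_nonneg_right (lp.norm_apply_le_norm two_ne_zero h n) (by positivity)

noncomputable def hSeries (h : H2) : FormalMultilinearSeries ℂ ℂ ℂ :=
  fun n => h n • ContinuousMultilinearMap.mkPiAlgebraFin ℂ n ℂ

lemma hSeries_radius (h : H2) : 1 ≤ (hSeries h).radius := by
  apply FormalMultilinearSeries.le_radius_of_bound _ ‖h‖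
  intro n
  show ‖h n • ContinuousMultilinearMap.mkPiAlgebraFin ℂ n ℂ‖ * ((1:NNReal):ℝ) ^ n ≤ ‖h‖
  have hns := norm_smul (h n) (ContinuousMultilinearMap.mkPiAlgebraFin ℂ n ℂ)
  rw [hns, ContinuousMultilinearMap.norm_mkPiAlgebraFin, mul_one]
  simpa using lp.norm_apply_le_norm two_ne_zero h n
lemma hardy_hasFPower (h : H2) :
    HasFPowerSeriesOnBall (hardyEval h) (hSeries h) 0 1 := by
  have h0 : (0 : ENNReal) < 1 := by norm_num
  have := ((hSeries h).hasFPowerSeriesOnBall (lt_of_lt_of_le h0 (hSeries_radius h))).mono h0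
    (hSeries_radius h)
  have hsum : (hSeries h).sum = hardyEval h := by
    funext z
    simp [FormalMultilinearSeries.sum, hSeries, hardyEval, ContinuousMultilinearMap.smul_apply,
      ContinuousMultilinearMap.mkPiAlgebraFin_apply, smul_eq_mul]
  rwa [hsum] at this

lemma hardy_diff (h : H2) {z : ℂ} (hz : z ∈ ball (0:ℂ) 1) :
    DifferentiableAt ℂ (hardyEval h) z := by
  have := (hardy_hasFPower h).analyticAt_of_mem (by
    rw [EMetric.mem_ball, edist_dist, ← ENNReal.ofReal_one]; exact (ENNReal.ofReal_lt_ofReal_iff one_pos).2 hz)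
  exact this.differentiableAt

/-- If `A_f` is densely defined and `γ : [0,T] → 𝔻` solves `γ̇ = f(γ)`, then the
occupation kernel `Γ_γ` lies in the domain of `A_f*` and
`A_f* Γ_γ = K_{γ(T)} − K_{γ(0)}` (Szegő kernels `K_w(z) = Σ w̄ⁿ zⁿ`). -/
theorem adjoint_on_occupation_kernel (f : ℂ → ℂ)
    (hdense : Dense {g : H2 | ∃ u : H2, ∀ z ∈ ball (0 : ℂ) 1,
      hardyEval u z = f z * deriv (hardyEval g) z})
    (T : ℝ) (hT : 0 < T) (γ : ℝ → ℂ)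
    (hγmap : ∀ t ∈ Set.Icc (0 : ℝ) T, γ t ∈ ball (0 : ℂ) 1)
    (hγode : ∀ t ∈ Set.Icc (0 : ℝ) T, HasDerivAt γ (f (γ t)) t)
    (Γ : H2)
    (hΓ : ∀ g : H2, ∑' n : ℕ, g n * conj (Γ n) = ∫ t in (0 : ℝ)..T, hardyEval g (γ t)) :
    Memℓp (fun n : ℕ => (conj (γ T)) ^ n - (conj (γ 0)) ^ n) 2 ∧
    ∀ g u : H2, (∀ z ∈ ball (0 : ℂ) 1, hardyEval u z = f z * deriv (hardyEval g) z) →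
      ∑' n : ℕ, u n * conj (Γ n) =
      ∑' n : ℕ, g n * conj ((conj (γ T)) ^ n - (conj (γ 0)) ^ n) := by
  have haT : ‖γ T‖ < 1 := by
    simpa [Metric.mem_ball, dist_eq_norm] using hγmap T ⟨hT.le, le_refl T⟩
  have ha0 : ‖γ 0‖ < 1 := by
    simpa [Metric.mem_ball, dist_eq_norm] using hγmap 0 ⟨le_refl 0, hT.le⟩
  have hmem : ∀ w : ℂ, ‖w‖ < 1 → Memℓp (fun n : ℕ => (conj w) ^ n) 2 := by
    intro w hw
    apply memℓp_gen
    have : Summable (fun n : ℕ => (‖w‖ ^ 2) ^ n) :=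
      summable_geometric_of_lt_one (by positivity) (by nlinarith [norm_nonneg w])
    apply this.congr
    intro n
    have h2r : (ENNReal.toReal 2) = ((2:ℕ):ℝ) := by norm_num
    rw [h2r, Real.rpow_natCast, norm_pow, RCLike.norm_conj, ← pow_mul, ← pow_mul, mul_comm]
  constructor
  · exact (hmem _ haT).sub (hmem _ ha0)
  · intro g u hu
    -- FTC step
    have key : (∫ t in (0:ℝ)..T, hardyEval u (γ t)) = hardyEval g (γ T) - hardyEval g (γ 0) := by
      apply intervalIntegral.integral_eq_sub_of_hasDerivAt
      · intro t ht
        rw [Set.uIcc_of_le hT.le] at ht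
        have hdg := hardy_diff g (hγmap t ht)
        have h1 : HasDerivAt (hardyEval g) (deriv (hardyEval g) (γ t)) (γ t) := hdg.hasDerivAt
        have h2 := (h1.hasFDerivAt.restrictScalars ℝ).comp_hasDerivAt t (hγode t ht)
        have h3 : HasDerivAt (fun s => hardyEval g (γ s))
            (f (γ t) * deriv (hardyEval g) (γ t)) t := by
          convert h2 using 1 <;> rfl
        rw [← hu (γ t) (hγmap t ht)] at h3
        exact h3
      · apply ContinuousOn.intervalIntegrable
        intro t ht
        rw [Set.uIcc_of_le hT.le] at ht
        exact ((hardy_diff u (hγmap t ht)).continuousAt.comp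
          (hγode t ht).continuousAt).continuousWithinAt
    rw [hΓ u, key]
    -- RHS tsum
    have hsT := hardy_summable g haT
    have hs0 := hardy_summable g ha0
    have : ∀ n : ℕ, g n * conj ((conj (γ T)) ^ n - (conj (γ 0)) ^ n)
        = g n * (γ T) ^ n - g n * (γ 0) ^ n := by
      intro n
      rw [map_sub, map_pow, map_pow, Complex.conj_conj, Complex.conj_conj, mul_sub]
    rw [tsum_congr this, hsT.tsum_sub hs0]
    rfl
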